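/- arXiv:2107.13933 — 2 statements merged into one kernel-verified Lean document; each statement's English description precedes it below -/
import Mathlib

section
/- Let α₁, α₂ be nonzero complex constants with α₁ ≠ α₂. If f is an entire function, not identically zero, satisfying α₁α₂f(z)² − 2(α₁+α₂)f(z)f'(z) + 2f(z)f''(z) + 2f'(z)² = 0 for all z ∈ ℂ, then there is a nonzero complex constant c such that either f(z) = c·e^{α₁ z/2} for all z, or f(z) = c·e^{α₂ z/2} for all z. In particular f has no zeros. -/
open Complex

private lemma solveExpAux (a : ℂ) (h : ℂ → ℂ) (hd : Differentiable ℂ h)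
    (hode : ∀ z, deriv h z = a * h z) : ∀ z, h z = h 0 * Complex.exp (a * z) := by
  set k : ℂ → ℂ := fun z => h z * Complex.exp (-a * z) with hk
  have hkd : ∀ z, HasDerivAt k 0 z := by
    intro z
    have h1 : HasDerivAt h (a * h z) z := hode z ▸ (hd z).hasDerivAt
    have h2 : HasDerivAt (fun z => Complex.exp (-a * z)) (Complex.exp (-a * z) * (-a)) z := by
      simpa using ((hasDerivAt_id z).const_mul (-a)).cexp
    have h3 := h1.fun_mul h2
    refine h3.congr_deriv ?_
    ring
  have hconst : ∀ z, k z = k 0 := fun z =>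
    is_const_of_deriv_eq_zero (fun x => (hkd x).differentiableAt) (fun x => (hkd x).deriv) z 0
  intro z
  have hz := hconst z
  simp only [hk] at hz
  calc h z = h z * Complex.exp (-a * z) * Complex.exp (a * z) := by
        rw [mul_assoc, ← Complex.exp_add]; simp
    _ = h 0 * Complex.exp (-a * 0) * Complex.exp (a * z) := by rw [hz]
    _ = h 0 * Complex.exp (a * z) := by simp

private lemma solveExpInhom (a C : ℂ) (ha : a ≠ 0) (u : ℂ → ℂ) (hd : Differentiable ℂ u)
    (hode : ∀ z, deriv u z = C * Complex.exp (a * z)) :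
    ∀ z, u z = (u 0 - C / a) + C / a * Complex.exp (a * z) := by
  set v : ℂ → ℂ := fun z => u z - C / a * Complex.exp (a * z) with hv
  have hvd : ∀ z, HasDerivAt v 0 z := by
    intro z
    have hbase : HasDerivAt (fun z => Complex.exp (a * z)) (a * Complex.exp (a * z)) z := by
      have := ((hasDerivAt_id z).const_mul a).cexp
      simpa [mul_comm] using this
    have h2 := hbase.const_mul (C / a)
    have h1 : HasDerivAt u (C * Complex.exp (a * z)) z := hode z ▸ (hd z).hasDerivAt
    have h3 := h1.fun_sub h2
    refine h3.congr_deriv ?_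
    field_simp
    ring
  have hconst : ∀ z, v z = v 0 := fun z =>
    is_const_of_deriv_eq_zero (fun x => (hvd x).differentiableAt) (fun x => (hvd x).deriv) z 0
  intro z
  have hz := hconst z
  simp only [hv, mul_zero, Complex.exp_zero, mul_one] at hz
  linear_combination hz

theorem psi_vanishing_forces_exponential
    (α₁ α₂ : ℂ) (hα₁ : α₁ ≠ 0) (hα₂ : α₂ ≠ 0) (hαα : α₁ ≠ α₂)
    (f : ℂ → ℂ) (hf : Differentiable ℂ f) (hf0 : f ≠ fun _ => 0)
    (heq : ∀ z : ℂ, α₁ * α₂ * f z ^ 2 - 2 * (α₁ + α₂) * f z * deriv f z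
        + 2 * f z * deriv (deriv f) z + 2 * (deriv f z) ^ 2 = 0) :
    (∃ c : ℂ, c ≠ 0 ∧
      ((∀ z : ℂ, f z = c * Complex.exp (α₁ * z / 2)) ∨
       (∀ z : ℂ, f z = c * Complex.exp (α₂ * z / 2)))) ∧
    ∀ z : ℂ, f z ≠ 0 := by
  have hf' : Differentiable ℂ (deriv f) := by
    have h2 : ContDiff ℂ 2 f := hf.contDiff
    have := (contDiff_succ_iff_deriv.mp (h2.of_le (by norm_num : (1 + 1 : WithTop ℕ∞) ≤ 2))).2.2
    exact this.differentiable one_ne_zero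
  set g : ℂ → ℂ := fun z => f z ^ 2 with hgdef
  have hg : Differentiable ℂ g := fun z => ((hf z).pow 2)
  have hgd : ∀ z, deriv g z = 2 * f z * deriv f z := by
    intro z
    rw [hgdef]
    simpa using ((hf z).hasDerivAt.fun_pow 2).deriv
  have hgd' : Differentiable ℂ (deriv g) := by
    have hh : deriv g = fun z => 2 * f z * deriv f z := funext hgd
    rw [hh]
    exact ((hf.const_mul 2).mul hf')
  have hgdd : ∀ z, deriv (deriv g) z
      = 2 * deriv f z * deriv f z + 2 * f z * deriv (deriv f) z := by
    intro z
    have h1 : deriv g = fun z => 2 * f z * deriv f z := funext hgd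
    rw [h1]
    have ha : HasDerivAt (fun z => 2 * f z) (2 * deriv f z) z := (hf z).hasDerivAt.const_mul 2
    have hb : HasDerivAt (deriv f) (deriv (deriv f) z) z := (hf' z).hasDerivAt
    exact (ha.mul hb).deriv
  have hODE : ∀ z, deriv (deriv g) z = (α₁ + α₂) * deriv g z - α₁ * α₂ * g z := by
    intro z
    rw [hgd, hgdd]
    simp only [hgdef]
    linear_combination heq z
  set h : ℂ → ℂ := fun z => deriv g z - α₁ * g z with hhdef
  have hh : Differentiable ℂ h := hgd'.sub (hg.const_mul α₁)
  have hhd : ∀ z, deriv h z = α₂ * h z := by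
    intro z
    have h1 : HasDerivAt h (deriv (deriv g) z - α₁ * deriv g z) z :=
      (hgd' z).hasDerivAt.sub ((hg z).hasDerivAt.const_mul α₁)
    rw [h1.deriv, hODE z]
    simp only [hhdef]
    ring
  have hhsol := solveExpAux α₂ h hh hhd
  set C : ℂ := h 0 with hCdef
  set u : ℂ → ℂ := fun z => g z * Complex.exp (-α₁ * z) with hudef
  have hud : ∀ z, HasDerivAt u (C * Complex.exp ((α₂ - α₁) * z)) z := by
    intro z
    have h2 : HasDerivAt (fun z => Complex.exp (-α₁ * z)) (Complex.exp (-α₁ * z) * (-α₁)) z := by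
      simpa using ((hasDerivAt_id z).const_mul (-α₁)).cexp
    have h3 := (hg z).hasDerivAt.fun_mul h2
    refine h3.congr_deriv ?_
    have h5 : deriv g z - α₁ * g z = C * Complex.exp (α₂ * z) := hhsol z
    have hexp : Complex.exp (α₂ * z) * Complex.exp (-α₁ * z) = Complex.exp ((α₂ - α₁) * z) := by
      rw [← Complex.exp_add]; congr 1; ring
    linear_combination Complex.exp (-α₁ * z) * h5 + C * hexp
  have hu : Differentiable ℂ u := fun z => (hud z).differentiableAt
  have hαα₂ : α₂ - α₁ ≠ 0 := sub_ne_zero_of_ne (Ne.symm hαα)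
  have husol := solveExpInhom (α₂ - α₁) C hαα₂ u hu (fun z => (hud z).deriv)
  set B : ℂ := C / (α₂ - α₁) with hBdef
  set A : ℂ := u 0 - B with hAdef
  have hCB : C = (α₂ - α₁) * B := by rw [hBdef]; field_simp
  have hG : ∀ z, g z = A * Complex.exp (α₁ * z) + B * Complex.exp (α₂ * z) := by
    intro z
    have h1 : u z = A + B * Complex.exp ((α₂ - α₁) * z) := husol z
    have h2 : g z = u z * Complex.exp (α₁ * z) := by
      simp only [hudef, mul_assoc, ← Complex.exp_add]
      ring_nf
      simp
    rw [h2, h1]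
    have hexp : Complex.exp ((α₂ - α₁) * z) * Complex.exp (α₁ * z) = Complex.exp (α₂ * z) := by
      rw [← Complex.exp_add]; congr 1; ring
    linear_combination B * hexp
  have hG' : ∀ z, 2 * f z * deriv f z
      = α₁ * A * Complex.exp (α₁ * z) + α₂ * B * Complex.exp (α₂ * z) := by
    intro z
    have e' : deriv g z - α₁ * g z = C * Complex.exp (α₂ * z) := hhsol z
    linear_combination (-1 : ℂ) * hgd z + e' + α₁ * hG z + Complex.exp (α₂ * z) * hCB
  have hGf : ∀ z, f z ^ 2 = A * Complex.exp (α₁ * z) + B * Complex.exp (α₂ * z) := hG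
  -- helper to finish in the pure-exponential case
  have finish : ∀ (α D : ℂ), D ≠ 0 →
      (∀ z, f z ^ 2 = D * Complex.exp (α * z)) →
      (∀ z, 2 * f z * deriv f z = α * D * Complex.exp (α * z)) →
      ((∃ c : ℂ, c ≠ 0 ∧ ∀ z, f z = c * Complex.exp (α * z / 2)) ∧ ∀ z, f z ≠ 0) := by
    intro α D hD hsq hds
    have hfz : ∀ z, f z ≠ 0 := by
      intro z h0
      have h1 : D * Complex.exp (α * z) = 0 := by rw [← hsq z, h0]; ring
      exact (mul_ne_zero hD (Complex.exp_ne_zero _)) h1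
    have hode : ∀ z, deriv f z = α / 2 * f z := by
      intro z
      have h1 := hds z
      have h2 := hsq z
      have h3 : 2 * f z * deriv f z = α * f z ^ 2 := by rw [h2]; linear_combination h1
      have := mul_left_cancel₀ (mul_ne_zero two_ne_zero (hfz z)) (by linear_combination h3 :
        (2 * f z) * deriv f z = (2 * f z) * (α / 2 * f z))
      exact this
    have hsol := solveExpAux (α / 2) f hf hode
    refine ⟨⟨f 0, hfz 0, fun z => ?_⟩, hfz⟩
    rw [hsol z]
    congr 1
    ring
  by_cases hB : B = 0
  · have hA : A ≠ 0 := by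
      intro hA0
      apply hf0
      funext z
      have := hGf z
      rw [hA0, hB] at this
      simp at this
      exact this
    have := finish α₁ A hA (by intro z; rw [hGf z, hB]; ring)
      (by intro z; rw [hG' z, hB]; ring)
    exact ⟨⟨this.1.choose, this.1.choose_spec.1, Or.inl this.1.choose_spec.2⟩, this.2⟩
  · by_cases hA : A = 0
    · have := finish α₂ B hB (by intro z; rw [hGf z, hA]; ring)
        (by intro z; rw [hG' z, hA]; ring)
      exact ⟨⟨this.1.choose, this.1.choose_spec.1, Or.inr this.1.choose_spec.2⟩, this.2⟩
    · exfalso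
      have hBA : (-B / A : ℂ) ≠ 0 := div_ne_zero (neg_ne_zero.mpr hB) hA
      obtain ⟨w, hw⟩ : ∃ w, Complex.exp w = -B / A := by
        have : (-B / A) ∈ Set.range Complex.exp := by
          rw [Complex.range_exp]; exact hBA
        exact this
      have hαα₁ : α₁ - α₂ ≠ 0 := sub_ne_zero_of_ne hαα
      set z₀ : ℂ := w / (α₁ - α₂) with hz₀def
      have hz₀ : Complex.exp ((α₁ - α₂) * z₀) = -B / A := by
        rw [hz₀def, mul_div_cancel₀ _ hαα₁]
        exact hw
      have hexp1 : Complex.exp (α₁ * z₀) = (-B / A) * Complex.exp (α₂ * z₀) := by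
        rw [← hz₀, ← Complex.exp_add]; congr 1; ring
      have hgz0 : f z₀ ^ 2 = 0 := by
        rw [hGf z₀, hexp1]
        field_simp
        ring
      have hfz0 : f z₀ = 0 := by
        exact pow_eq_zero_iff (two_ne_zero) |>.mp hgz0
      have hg0 : A * Complex.exp (α₁ * z₀) + B * Complex.exp (α₂ * z₀) = 0 := by
        rw [← hGf z₀]; exact hgz0
      have hd0 : α₁ * A * Complex.exp (α₁ * z₀) + α₂ * B * Complex.exp (α₂ * z₀) = 0 := by
        rw [← hG' z₀, hfz0]; ring
      have hkey : (α₁ - α₂) * (A * Complex.exp (α₁ * z₀)) = 0 := by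
        linear_combination hd0 - α₂ * hg0
      rcases mul_eq_zero.mp hkey with h1 | h2
      · exact hαα₁ h1
      · rcases mul_eq_zero.mp h2 with h3 | h4
        · exact hA h3
        · exact Complex.exp_ne_zero _ h4
end

section
/- Let α₁, α₂ be complex constants with α₁ ≠ α₂. Let f be an entire function, not identically zero, such that the meromorphic function s = f'/f satisfies s'(z) + 2s(z)² − (α₁+α₂)s(z) + α₁α₂/2 = 0 at every point z where f(z) ≠ 0. Then s is constant: either s ≡ α₁/2 or s ≡ α₂/2. In particular f has no zeros (any nonconstant solution s of this Riccati equation would force f to have a zero at which the residue of f'/f equals 1/2, which is impossible since such residues are positive integers). -/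
open Complex Filter

private lemma exp_hasDerivAt (a z : ℂ) :
    HasDerivAt (fun w => Complex.exp (a * w)) (a * Complex.exp (a * z)) z := by
  have h : HasDerivAt (fun w : ℂ => a * w) (a * 1) z := (hasDerivAt_id z).const_mul a
  simpa [mul_comm] using h.cexp

private lemma riccati_aux (a b : ℂ) (f : ℂ → ℂ) (hf : Differentiable ℂ f)
    (hd1 : Differentiable ℂ (deriv f))
    (hE : ∀ z, deriv (deriv f) z * f z + (deriv f z) ^ 2
      - (a + b) * (deriv f z * f z) + a * b / 2 * (f z) ^ 2 = 0) :
    ∀ z, 2 * (f z * deriv f z) - a * f z ^ 2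
      = (2 * (f 0 * deriv f 0) - a * f 0 ^ 2) * Complex.exp (b * z) := by
  set G : ℂ → ℂ := fun z => 2 * (f z * deriv f z) - a * f z ^ 2 with hG
  set H : ℂ → ℂ := fun z => G z * Complex.exp (-b * z) with hH
  have hH' : ∀ z, HasDerivAt H 0 z := by
    intro z
    have h1 : HasDerivAt (fun w => f w * deriv f w)
        (deriv f z * deriv f z + f z * deriv (deriv f) z) z :=
      (hf.differentiableAt.hasDerivAt).mul (hd1.differentiableAt.hasDerivAt)
    have h2 : HasDerivAt (fun w => f w ^ 2) ((2 : ℂ) * f z ^ 1 * deriv f z) z :=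
      (hf.differentiableAt.hasDerivAt).pow 2
    have hGd : HasDerivAt G
        (2 * (deriv f z * deriv f z + f z * deriv (deriv f) z)
          - a * ((2 : ℂ) * f z ^ 1 * deriv f z)) z := by
      rw [hG]; exact (h1.const_mul 2).sub (h2.const_mul a)
    have hEx : HasDerivAt (fun w => Complex.exp (-b * w)) (-b * Complex.exp (-b * z)) z :=
      exp_hasDerivAt (-b) z
    have := hGd.mul hEx
    refine this.congr_deriv ?_
    have h3 := hE z
    simp only [hG]
    linear_combination (2 * Complex.exp (-b * z)) * h3
  have hconst : ∀ z, H z = H 0 := fun z =>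
    is_const_of_deriv_eq_zero (fun w => (hH' w).differentiableAt)
      (fun w => (hH' w).deriv) z 0
  intro z
  have h0 : H 0 = G 0 := by simp [hH]
  have hz := hconst z
  rw [h0] at hz
  have hex : Complex.exp (-b * z) * Complex.exp (b * z) = 1 := by
    rw [← Complex.exp_add]; ring_nf; exact Complex.exp_zero
  calc G z = G z * (Complex.exp (-b * z) * Complex.exp (b * z)) := by rw [hex, mul_one]
    _ = (G z * Complex.exp (-b * z)) * Complex.exp (b * z) := by ring
    _ = G 0 * Complex.exp (b * z) := by rw [← hz]

theorem riccati_logarithmic_derivative_constant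
    (α₁ α₂ : ℂ) (hαα : α₁ ≠ α₂)
    (f : ℂ → ℂ) (hf : Differentiable ℂ f) (hf0 : f ≠ fun _ => 0)
    (hric : ∀ z : ℂ, f z ≠ 0 →
      deriv (fun w => deriv f w / f w) z + 2 * (deriv f z / f z) ^ 2
        - (α₁ + α₂) * (deriv f z / f z) + α₁ * α₂ / 2 = 0) :
    ((∀ z : ℂ, deriv f z / f z = α₁ / 2) ∨ (∀ z : ℂ, deriv f z / f z = α₂ / 2)) ∧
    ∀ z : ℂ, f z ≠ 0 := by
  have hA : AnalyticOnNhd ℂ f Set.univ := fun z _ => hf.analyticAt z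
  have hA1 : AnalyticOnNhd ℂ (deriv f) Set.univ := hA.deriv
  have hd1 : Differentiable ℂ (deriv f) := fun z => (hA1 z trivial).differentiableAt
  have hd2 : Differentiable ℂ (deriv (deriv f)) := fun z => (hA1.deriv z trivial).differentiableAt
  set E : ℂ → ℂ := fun z => deriv (deriv f) z * f z + (deriv f z) ^ 2
      - (α₁ + α₂) * (deriv f z * f z) + α₁ * α₂ / 2 * (f z) ^ 2 with hEdef
  have hEcont : Continuous E := by
    apply Continuous.add
    apply Continuous.sub
    apply Continuous.add
    · exact hd2.continuous.mul hf.continuous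
    · exact (hd1.continuous).pow 2
    · exact continuous_const.mul ((hd1.continuous).mul hf.continuous)
    · exact continuous_const.mul ((hf.continuous).pow 2)
  have hEz : ∀ z, f z ≠ 0 → E z = 0 := by
    intro z hz
    have h1 : deriv (fun w => deriv f w / f w) z
        = (deriv (deriv f) z * f z - deriv f z * deriv f z) / (f z) ^ 2 :=
      deriv_div hd1.differentiableAt hf.differentiableAt hz
    have h2 := hric z hz
    rw [h1] at h2
    have : E z = (f z) ^ 2 * ((deriv (deriv f) z * f z - deriv f z * deriv f z) / (f z) ^ 2
        + 2 * (deriv f z / f z) ^ 2 - (α₁ + α₂) * (deriv f z / f z) + α₁ * α₂ / 2) := by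
      field_simp [hEdef]
      ring
    rw [this, h2, mul_zero]
  have hE0 : ∀ z, E z = 0 := by
    intro z
    by_cases hz : f z = 0
    · rcases (hf.analyticAt z).eventually_eq_zero_or_eventually_ne_zero with h | h
      · exfalso
        apply hf0
        funext w
        exact hA.eqOn_zero_of_preconnected_of_eventuallyEq_zero isPreconnected_univ
          (Set.mem_univ z) h (Set.mem_univ w)
      · have h' : ∀ᶠ w in nhdsWithin z {z}ᶜ, E w = 0 := h.mono fun w hw => hEz w hw
        have hT : Tendsto E (nhdsWithin z {z}ᶜ) (nhds (E z)) :=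
          tendsto_nhdsWithin_of_tendsto_nhds (hEcont.tendsto z)
        have hT0 : Tendsto E (nhdsWithin z {z}ᶜ) (nhds 0) :=
          tendsto_const_nhds.congr' (h'.mono fun w hw => hw.symm)
        exact tendsto_nhds_unique hT hT0
    · exact hEz z hz
  have hE1 : ∀ z, deriv (deriv f) z * f z + (deriv f z) ^ 2
      - (α₁ + α₂) * (deriv f z * f z) + α₁ * α₂ / 2 * (f z) ^ 2 = 0 := hE0
  have hE2 : ∀ z, deriv (deriv f) z * f z + (deriv f z) ^ 2
      - (α₂ + α₁) * (deriv f z * f z) + α₂ * α₁ / 2 * (f z) ^ 2 = 0 := by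
    intro z; linear_combination hE1 z
  have hc := riccati_aux α₁ α₂ f hf hd1 hE1
  have hd := riccati_aux α₂ α₁ f hf hd1 hE2
  set c := 2 * (f 0 * deriv f 0) - α₁ * f 0 ^ 2 with hcdef
  set d := 2 * (f 0 * deriv f 0) - α₂ * f 0 ^ 2 with hddef
  have hsq : ∀ z, (α₂ - α₁) * f z ^ 2 = c * Complex.exp (α₂ * z) - d * Complex.exp (α₁ * z) := by
    intro z
    have := hc z
    have := hd z
    linear_combination hc z - hd z
  have hab : α₂ - α₁ ≠ 0 := sub_ne_zero.mpr (Ne.symm hαα)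
  -- not both zero
  have hnboth : ¬ (c = 0 ∧ d = 0) := by
    rintro ⟨h1, h2⟩
    apply hf0
    funext w
    have := hsq w
    rw [h1, h2] at this
    simp at this
    rcases this with h | h
    · exact absurd h hab
    · exact h
  -- not both nonzero
  have hnboth2 : ¬ (c ≠ 0 ∧ d ≠ 0) := by
    rintro ⟨h1, h2⟩
    set z₀ := Complex.log (d / c) / (α₂ - α₁) with hz₀
    have hee : Complex.exp ((α₂ - α₁) * z₀) = d / c := by
      rw [hz₀, mul_div_cancel₀ _ hab]
      exact Complex.exp_log (div_ne_zero h2 h1)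
    have hce : c * Complex.exp (α₂ * z₀) = d * Complex.exp (α₁ * z₀) := by
      have hsplit : Complex.exp (α₂ * z₀) = Complex.exp ((α₂ - α₁) * z₀) * Complex.exp (α₁ * z₀) := by
        rw [← Complex.exp_add]; ring_nf
      rw [hsplit, hee]
      field_simp
    have hfz : f z₀ = 0 := by
      have := hsq z₀
      rw [hce] at this
      simp at this
      rcases this with h | h
      · exact absurd h hab
      · exact h
    have hG : 2 * (f z₀ * deriv f z₀) - α₁ * f z₀ ^ 2 = c * Complex.exp (α₂ * z₀) := hc z₀
    rw [hfz] at hG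
    simp at hG
    exact h1 hG
  -- so exactly one is zero
  by_cases h1 : c = 0
  ·
    have h2 : d ≠ 0 := fun hd0 => hnboth ⟨h1, hd0⟩
    have hfne : ∀ z, f z ≠ 0 := by
      intro z hz
      have := hsq z
      rw [hz, h1] at this
      simp at this
      exact h2 this
    refine ⟨Or.inl fun z => ?_, hfne⟩
    have hGz : 2 * (f z * deriv f z) - α₁ * f z ^ 2 = 0 := by
      rw [hc z, h1, zero_mul]
    have hfz := hfne z
    have h3 : f z * (2 * deriv f z - α₁ * f z) = 0 := by linear_combination hGz
    have h4 : 2 * deriv f z - α₁ * f z = 0 := (mul_eq_zero.mp h3).resolve_left hfz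
    field_simp
    linear_combination h4
  · have h2 : d = 0 := by
      by_contra h2
      exact hnboth2 ⟨h1, h2⟩
    have hfne : ∀ z, f z ≠ 0 := by
      intro z hz
      have := hsq z
      rw [hz, h2] at this
      simp at this
      exact h1 this
    refine ⟨Or.inr fun z => ?_, hfne⟩
    have hGz : 2 * (f z * deriv f z) - α₂ * f z ^ 2 = 0 := by
      rw [hd z, h2, zero_mul]
    have hfz := hfne z
    have h3 : f z * (2 * deriv f z - α₂ * f z) = 0 := by linear_combination hGz
    have h4 : 2 * deriv f z - α₂ * f z = 0 := (mul_eq_zero.mp h3).resolve_left hfz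
    field_simp
    linear_combination h4
end
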